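/- Let G be a graph with clique number at most w ≥ 2, and let (B_1,…,B_k) be a blockade in G that is w^{-1}-vivid, meaning: for all i < j in [k] and every v ∈ B_j, χ(B_i \ N_G(v)) < w^{-1}·χ(B_i), where each B_i is nonempty. Then k ≤ w. -/

import Mathlib

open SimpleGraph

/-- The chromatic number of the subgraph of `G` induced on `S`, as a natural number. -/
noncomputable def chiSet {V : Type*} (G : SimpleGraph V) (S : Set V) : ℕ :=
  (G.induce S).chromaticNumber.toNat

/-- The chromatic number of `G`, as a natural number. -/
noncomputable def chi {V : Type*} (G : SimpleGraph V) : ℕ :=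
  G.chromaticNumber.toNat

/-- `(A, B)` is an anticomplete pair: no edge of `G` joins `A` and `B`. -/
def Anticomplete {V : Type*} (G : SimpleGraph V) (A B : Set V) : Prop :=
  ∀ a ∈ A, ∀ b ∈ B, ¬ G.Adj a b

/-- `G` is `H`-free: no induced subgraph of `G` is isomorphic to `H`. -/
def FreeOf {V W : Type*} (G : SimpleGraph V) (H : SimpleGraph W) : Prop :=
  IsEmpty (H ↪g G)

section Aux
variable {V : Type*} [Fintype V] (G : SimpleGraph V)

lemma chiSet_colorable (S : Set V) : (G.induce S).Colorable (chiSet G S) :=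
  colorable_chromaticNumber_of_fintype _

lemma chiSet_le_iff {S : Set V} {n : ℕ} : chiSet G S ≤ n ↔ (G.induce S).Colorable n := by
  constructor
  · exact fun h => (chiSet_colorable G S).mono h
  · intro h
    have := ENat.toNat_le_toNat h.chromaticNumber_le (by simp)
    simpa [chiSet] using this

lemma chiSet_mono {S T : Set V} (h : S ⊆ T) : chiSet G S ≤ chiSet G T :=
  (chiSet_le_iff G).mpr ((chiSet_colorable G T).of_hom (G.induceHomOfLE h).toHom)

lemma chiSet_union_le (A C : Set V) : chiSet G (A ∪ C) ≤ chiSet G A + chiSet G C := by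
  classical
  obtain ⟨ca⟩ := chiSet_colorable G A
  obtain ⟨cc⟩ := chiSet_colorable G C
  rw [chiSet_le_iff]
  have col : (G.induce (A ∪ C)).Coloring (Fin (chiSet G A) ⊕ Fin (chiSet G C)) :=
    Coloring.mk
      (fun v => if h : (v : V) ∈ A then Sum.inl (ca ⟨v, h⟩)
        else Sum.inr (cc ⟨v, v.2.resolve_left h⟩))
      (by
        rintro ⟨u, hu⟩ ⟨v, hv⟩ huv
        have hadj : G.Adj u v := huv
        by_cases h1 : u ∈ A <;> by_cases h2 : v ∈ A <;> simp [h1, h2]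
        · exact ca.valid (show (G.induce A).Adj ⟨u, h1⟩ ⟨v, h2⟩ from hadj)
        · exact cc.valid (show (G.induce C).Adj ⟨u, hu.resolve_left h1⟩ ⟨v, hv.resolve_left h2⟩ from hadj))
  simpa using col.colorable

lemma chiSet_pos {S : Set V} (h : S.Nonempty) : 1 ≤ chiSet G S := by
  have : Nonempty ↥S := h.to_subtype
  have hpos : 0 < (G.induce S).chromaticNumber := by
    cases nonempty_fintype (↥S)
    exact chromaticNumber_pos (G.induce S).colorable_of_fintype
  rw [chiSet, Nat.one_le_iff_ne_zero]
  intro h0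
  rw [ENat.toNat_eq_zero] at h0
  rcases h0 with h0 | h0
  · exact hpos.ne' h0
  · have : (G.induce S).chromaticNumber ≠ ⊤ := by
      rw [chromaticNumber_ne_top_iff_exists]
      cases nonempty_fintype (↥S)
      exact ⟨_, (G.induce S).colorable_of_fintype⟩
    exact this h0

lemma nonempty_of_chiSet_pos {S : Set V} (h : 0 < chiSet G S) : S.Nonempty := by
  by_contra hc
  rw [Set.not_nonempty_iff_eq_empty] at hc
  subst hc
  have : IsEmpty (↥(∅ : Set V)) := by simp
  rw [chiSet, chromaticNumber_eq_zero_of_isEmpty] at h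
  simp at h

lemma chiSet_diff_le (A D : Set V) :
    chiSet G A ≤ chiSet G (A \ D) + chiSet G (A ∩ D) := by
  refine le_trans (chiSet_mono G ?_) (chiSet_union_le G _ _)
  rw [Set.diff_union_inter]

lemma chiSet_le_diff_add_sum {ι : Type*} (A : Set V) (D : ι → Set V) (s : Finset ι) :
    chiSet G A ≤ chiSet G (A \ ⋃ i ∈ s, D i) + ∑ i ∈ s, chiSet G (A ∩ D i) := by
  classical
  induction s using Finset.induction_on with
  | empty => simp
  | @insert a s ha ih =>
    have h1 : A \ ⋃ i ∈ insert a s, D i = (A \ ⋃ i ∈ s, D i) \ D a := by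
      rw [Finset.set_biUnion_insert, Set.diff_diff, Set.union_comm]
    calc chiSet G A ≤ chiSet G (A \ ⋃ i ∈ s, D i) + ∑ i ∈ s, chiSet G (A ∩ D i) := ih
      _ ≤ (chiSet G ((A \ ⋃ i ∈ s, D i) \ D a) + chiSet G ((A \ ⋃ i ∈ s, D i) ∩ D a))
          + ∑ i ∈ s, chiSet G (A ∩ D i) := by
        exact Nat.add_le_add_right (chiSet_diff_le G _ _) _
      _ ≤ chiSet G (A \ ⋃ i ∈ insert a s, D i) + ∑ i ∈ insert a s, chiSet G (A ∩ D i) := by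
        rw [Finset.sum_insert ha, h1]
        have : chiSet G ((A \ ⋃ i ∈ s, D i) ∩ D a) ≤ chiSet G (A ∩ D a) :=
          chiSet_mono G (Set.inter_subset_inter_left _ Set.diff_subset)
        omega

end Aux


/-- Let `G` have clique number at most `w ≥ 2` and let `(B₁, …, B_k)` be a
`w⁻¹`-vivid blockade of nonempty disjoint sets, i.e. for all `i < j` and `v ∈ B j`,
`χ(B i \ N_G(v)) < w⁻¹ · χ(B i)`. Then `k ≤ w`. -/
theorem stmt_3 {V : Type*} [Fintype V] (G : SimpleGraph V) (w : ℕ) (hw : 2 ≤ w)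
    (hclique : G.CliqueFree (w + 1)) (k : ℕ) (B : Fin k → Set V)
    (hne : ∀ i, (B i).Nonempty)
    (hdisj : ∀ i j, i ≠ j → Disjoint (B i) (B j))
    (hvivid : ∀ i j : Fin k, i < j → ∀ v ∈ B j,
      w * chiSet G (B i \ G.neighborSet v) < chiSet G (B i)) :
    k ≤ w := by
  classical
  by_contra hk
  push_neg at hk
  have hV : Nonempty V := ⟨(hne ⟨0, by omega⟩).choose⟩
  have main : ∀ t, t ≤ w + 1 → ∃ f : ℕ → V,
      ∀ s, s < t → f s ∈ B ⟨k - 1 - s, by omega⟩ ∧ ∀ r < s, G.Adj (f r) (f s) := by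
    intro t
    induction t with
    | zero => exact fun _ => ⟨fun _ => Classical.arbitrary V, fun s hs => absurd hs (by omega)⟩
    | succ t ih =>
      intro ht
      obtain ⟨f, hf⟩ := ih (by omega)
      set j : Fin k := ⟨k - 1 - t, by omega⟩ with hj
      set c := chiSet G (B j) with hc
      set S : Set V := B j \ ⋃ r ∈ Finset.range t, (B j \ G.neighborSet (f r)) with hS
      have hterm : ∀ r ∈ Finset.range t,
          w * chiSet G (B j ∩ (B j \ G.neighborSet (f r))) ≤ c - 1 := by
        intro r hr
        rw [Finset.mem_range] at hr
        have hlt : j < (⟨k - 1 - r, by omega⟩ : Fin k) := by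
          simp only [hj, Fin.mk_lt_mk]; omega
        have hv := hvivid j ⟨k - 1 - r, by omega⟩ hlt (f r) (hf r (by omega)).1
        have hmono : chiSet G (B j ∩ (B j \ G.neighborSet (f r)))
            ≤ chiSet G (B j \ G.neighborSet (f r)) :=
          chiSet_mono G Set.inter_subset_right
        exact Nat.le_sub_one_of_lt (lt_of_le_of_lt (Nat.mul_le_mul_left w hmono) hv)
      have hcov := chiSet_le_diff_add_sum G (B j)
        (fun r => B j \ G.neighborSet (f r)) (Finset.range t)
      have hc1 : 1 ≤ c := chiSet_pos G (hne j)
      have hsum : ∑ r ∈ Finset.range t, w * chiSet G (B j ∩ (B j \ G.neighborSet (f r)))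
          ≤ t * (c - 1) := by
        calc _ ≤ ∑ _r ∈ Finset.range t, (c - 1) := Finset.sum_le_sum hterm
          _ = t * (c - 1) := by simp [Finset.sum_const, Nat.mul_comm]
      have h2 : t * (c - 1) ≤ w * (c - 1) := Nat.mul_le_mul_right _ (by omega)
      have h3 : w * c = w * (c - 1) + w := by
        have hc' : c - 1 + 1 = c := by omega
        calc w * c = w * (c - 1 + 1) := by rw [hc']
          _ = w * (c - 1) + w := by ring
      have h4 : w * c ≤ w * chiSet G S
          + ∑ r ∈ Finset.range t, w * chiSet G (B j ∩ (B j \ G.neighborSet (f r))) := by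
        rw [← Finset.mul_sum, ← Nat.mul_add]
        exact Nat.mul_le_mul_left _ hcov
      have hw' : w ≤ w * chiSet G S := by linarith
      have hSpos : 0 < chiSet G S := by
        rcases Nat.eq_zero_or_pos (chiSet G S) with h0 | h0
        · rw [h0, Nat.mul_zero] at hw'; omega
        · exact h0
      obtain ⟨x, hxB, hxU⟩ := nonempty_of_chiSet_pos G hSpos
      refine ⟨Function.update f t x, ?_⟩
      intro s hs
      rcases Nat.lt_or_ge s t with h' | h'
      · rw [Function.update_of_ne (by omega)]
        obtain ⟨h1, h2⟩ := hf s h'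
        exact ⟨h1, fun r hr => by
          rw [Function.update_of_ne (by omega)]; exact h2 r hr⟩
      · have hst : s = t := by omega
        subst hst
        rw [Function.update_self]
        refine ⟨hxB, ?_⟩
        intro r hr
        rw [Function.update_of_ne (by omega)]
        by_contra hadj
        exact hxU (Set.mem_iUnion₂.mpr ⟨r, Finset.mem_range.mpr hr, ⟨hxB, hadj⟩⟩)
  obtain ⟨f, hf⟩ := main (w + 1) le_rfl
  have hAdj : ∀ r s, r < s → s < w + 1 → G.Adj (f r) (f s) := fun r s hrs hs => (hf s hs).2 r hrs
  have hinjAdj : ∀ r s, r < w + 1 → s < w + 1 → r ≠ s → G.Adj (f r) (f s) := by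
    intro r s hr hs hne'
    rcases Nat.lt_or_ge r s with h | h
    · exact hAdj r s h hs
    · exact (hAdj s r (by omega) hr).symm
  apply hclique ((Finset.range (w + 1)).image f)
  refine ⟨?_, ?_⟩
  · intro x hx y hy hxy
    rw [Finset.mem_coe, Finset.mem_image] at hx hy
    obtain ⟨r, hr, rfl⟩ := hx
    obtain ⟨s, hs, rfl⟩ := hy
    exact hinjAdj r s (Finset.mem_range.mp hr) (Finset.mem_range.mp hs)
      (fun h => hxy (by rw [h]))
  · rw [Finset.card_image_of_injOn, Finset.card_range]
    intro r hr s hs hfrs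
    rw [Finset.mem_coe, Finset.mem_range] at hr hs
    by_contra hne'
    exact (hinjAdj r s hr hs hne').ne hfrs
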